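/- For all n ≥ 1: e^{-n}·√2 < (2n)! / ((2n-1)^n · 2^n · n!). -/

import Mathlib

open Real

lemma sqrt_pi_le_stirlingSeq (n : ℕ) (hn : 1 ≤ n) : Real.sqrt π ≤ Stirling.stirlingSeq n := by
  have ht : Filter.Tendsto (Stirling.stirlingSeq ∘ Nat.succ) Filter.atTop (nhds (Real.sqrt π)) :=
    Stirling.tendsto_stirlingSeq_sqrt_pi.comp (Filter.tendsto_add_atTop_nat 1)
  have := Stirling.stirlingSeq'_antitone.le_of_tendsto ht (n - 1)
  simp only [Function.comp_apply, Nat.succ_eq_add_one, Nat.sub_add_cancel hn] at this; exact this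

lemma stirlingSeq_le (n : ℕ) (hn : 1 ≤ n) : Stirling.stirlingSeq n ≤ Real.exp 1 / Real.sqrt 2 := by
  have := Stirling.stirlingSeq'_antitone (Nat.zero_le (n - 1))
  rw [← Stirling.stirlingSeq_one]; simp only [Function.comp_apply, Nat.succ_eq_add_one, Nat.sub_add_cancel hn] at this; simpa using this

/-- `e⁻ⁿ √2 < (2n)! / ((2n-1)ⁿ 2ⁿ n!)` for all `n ≥ 1`. -/
theorem exp_sqrt_lt_normalized_pm_count (n : ℕ) (hn : 1 ≤ n) :
    Real.exp (-(n : ℝ)) * Real.sqrt 2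
      < (Nat.factorial (2 * n) : ℝ) / ((2 * (n : ℝ) - 1) ^ n * 2 ^ n * Nat.factorial n) := by
  set N : ℝ := (n : ℝ) with hNdef
  have hN : 1 ≤ N := by simp only [hNdef]; exact_mod_cast hn
  set E : ℝ := Real.exp 1 with hEdef
  have hE0 : 0 < E := Real.exp_pos 1
  have hx : (0 : ℝ) < 2 * N - 1 := by linarith
  have hfub : (Nat.factorial n : ℝ) ≤ (E / Real.sqrt 2) * (Real.sqrt (2 * N) * (N / E) ^ n) := by
    have h := stirlingSeq_le n hn
    have hd : 0 < Real.sqrt (2 * N) * (N / E) ^ n := by positivity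
    rw [Stirling.stirlingSeq, div_le_iff₀ hd] at h
    simpa [mul_assoc] using h
  have hflb : Real.sqrt π * (Real.sqrt (2 * (2 * N)) * ((2 * N) / E) ^ (2 * n))
      ≤ (Nat.factorial (2 * n) : ℝ) := by
    have h := sqrt_pi_le_stirlingSeq (2 * n) (by omega)
    have hd : 0 < Real.sqrt (2 * ((2 * n : ℕ) : ℝ)) * (((2 * n : ℕ) : ℝ) / E) ^ (2 * n) := by
      have : (0:ℝ) < ((2 * n : ℕ) : ℝ) := by positivity
      positivity
    rw [Stirling.stirlingSeq, le_div_iff₀ hd] at h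
    push_cast at h
    linarith [h]
  have hdenpos : 0 < (2 * N - 1) ^ n * 2 ^ n * (Nat.factorial n : ℝ) := by
    have h1 : (0:ℝ) < (2 * N - 1) ^ n := pow_pos hx n
    have h2 : (0:ℝ) < (Nat.factorial n : ℝ) := by exact_mod_cast Nat.factorial_pos n
    positivity
  rw [lt_div_iff₀ hdenpos]
  have hEn : Real.exp (-N) = (E ^ n)⁻¹ := by
    rw [Real.exp_neg]
    congr 1
    rw [hNdef, hEdef, ← Real.exp_nat_mul, mul_one]
  -- Bernoulli-type bound: (3/2)(2N-1)^n ≤ (2N)^n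
  have hber : (3 / 2 : ℝ) * (2 * N - 1) ^ n ≤ (2 * N) ^ n := by
    have hxx : (0 : ℝ) ≤ 1 / (2 * N - 1) := by positivity
    have hb := one_add_mul_le_pow (show (-2 : ℝ) ≤ 1 / (2 * N - 1) by linarith) n
    have h1 : (1 : ℝ) + 1 / (2 * N - 1) = (2 * N) / (2 * N - 1) := by field_simp; ring
    have h2 : (3 / 2 : ℝ) ≤ 1 + (n : ℝ) * (1 / (2 * N - 1)) := by
      have : (1 / 2 : ℝ) ≤ N * (1 / (2 * N - 1)) := by
        rw [mul_one_div, le_div_iff₀ hx]; linarith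
      rw [← hNdef]; linarith
    have h3 : ((2 * N) / (2 * N - 1)) ^ n * (2 * N - 1) ^ n = (2 * N) ^ n := by
      rw [div_pow, div_mul_cancel₀]
      exact pow_ne_zero _ hx.ne'
    calc (3 / 2 : ℝ) * (2 * N - 1) ^ n
        ≤ ((2 * N) / (2 * N - 1)) ^ n * (2 * N - 1) ^ n :=
          mul_le_mul_of_nonneg_right (h2.trans (h1 ▸ hb)) (pow_nonneg hx.le n)
      _ = (2 * N) ^ n := h3
  have key : E * (2 * N - 1) ^ n < Real.sqrt 2 * Real.sqrt π * (2 * N) ^ n := by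
    have hs2 : (1.414 : ℝ) ≤ Real.sqrt 2 := by
      rw [show (1.414:ℝ) = Real.sqrt (1.414^2) by rw [Real.sqrt_sq]; norm_num]
      exact Real.sqrt_le_sqrt (by norm_num)
    have hsp : (1.772 : ℝ) ≤ Real.sqrt π := by
      rw [show (1.772:ℝ) = Real.sqrt (1.772^2) by rw [Real.sqrt_sq]; norm_num]
      exact Real.sqrt_le_sqrt (by nlinarith [Real.pi_gt_d6])
    have hElt : E < 2.7182818286 := Real.exp_one_lt_d9
    have hp : (0:ℝ) < (2 * N - 1) ^ n := pow_pos hx n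
    nlinarith [hber, hp, mul_le_mul hs2 hsp (by norm_num) (Real.sqrt_nonneg 2)]
  calc Real.exp (-N) * Real.sqrt 2 * ((2 * N - 1) ^ n * 2 ^ n * (Nat.factorial n : ℝ))
      ≤ Real.exp (-N) * Real.sqrt 2 * ((2 * N - 1) ^ n * 2 ^ n *
        ((E / Real.sqrt 2) * (Real.sqrt (2 * N) * (N / E) ^ n))) := by
        exact mul_le_mul_of_nonneg_left
          (mul_le_mul_of_nonneg_left hfub (mul_nonneg (pow_nonneg hx.le n) (by positivity)))
          (by positivity)
    _ = ((E ^ (2 * n))⁻¹ * 2 ^ n * Real.sqrt (2 * N) * N ^ n) * (E * (2 * N - 1) ^ n) := by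
        rw [hEn, div_pow]
        have h2 : Real.sqrt 2 ≠ 0 := by positivity
        field_simp
        ring
    _ < ((E ^ (2 * n))⁻¹ * 2 ^ n * Real.sqrt (2 * N) * N ^ n) * (Real.sqrt 2 * Real.sqrt π * (2 * N) ^ n) := by
        have hC : 0 < (E ^ (2 * n))⁻¹ * 2 ^ n * Real.sqrt (2 * N) * N ^ n := by
          have : (0:ℝ) < N := by linarith
          positivity
        exact mul_lt_mul_of_pos_left key hC
    _ = Real.sqrt π * (Real.sqrt (2 * (2 * N)) * ((2 * N) / E) ^ (2 * n)) := by
        rw [show (2 : ℝ) * (2 * N) = 2 * (2 * N) from rfl, Real.sqrt_mul (by norm_num : (0:ℝ) ≤ 2), div_pow]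
        have : ((2 * N) ^ (2 * n) : ℝ) = 2 ^ n * N ^ n * (2 * N) ^ n := by
          rw [two_mul n, pow_add, mul_pow]
        rw [this]
        field_simp
        ring
        rw [Real.sq_sqrt (by norm_num : (0:ℝ) ≤ 2), show N * 4 = 2 ^ 2 * N by ring, Real.sqrt_mul (by positivity), Real.sqrt_sq (by norm_num : (0:ℝ) ≤ 2)]
    _ ≤ (Nat.factorial (2 * n) : ℝ) := hflb
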